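/- Let 0 < α < 1 and let k ≥ 1, d ≥ 1 be integers. Then the sum over all tuples (x₁, …, x_{k+1}) ∈ (ℤ^d)^{k+1} with x₁ = 0 and x_{k+1} = 0 of the product over i = 1,…,k of (‖x_i‖ + ‖x_{i+1}‖)·α^{‖x_i − x_{i+1}‖} is finite. -/

import Mathlib

noncomputable def znorm {d : ℕ} (v : Fin d → ℤ) : ℝ :=
  ‖(WithLp.equiv 2 (Fin d → ℝ)).symm fun i => (v i : ℝ)‖

noncomputable def zemb {d : ℕ} (v : Fin d → ℤ) : EuclideanSpace ℝ (Fin d) :=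
  (WithLp.equiv 2 (Fin d → ℝ)).symm fun i => (v i : ℝ)

lemma znorm_eq_zemb {d : ℕ} (v : Fin d → ℤ) : znorm v = ‖zemb v‖ := rfl

lemma zemb_apply {d : ℕ} (v : Fin d → ℤ) (i : Fin d) : zemb v i = (v i : ℝ) := rfl

lemma zemb_sub {d : ℕ} (u v : Fin d → ℤ) : zemb (u - v) = zemb u - zemb v := by
  ext i
  simp only [zemb, WithLp.equiv_symm_apply, PiLp.toLp_apply, PiLp.sub_apply, Pi.sub_apply]
  push_cast
  ring

lemma znorm_nonneg {d : ℕ} (v : Fin d → ℤ) : 0 ≤ znorm v := norm_nonneg _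

lemma abs_coord_le_znorm {d : ℕ} (v : Fin d → ℤ) (j : Fin d) :
    |((v j : ℤ) : ℝ)| ≤ znorm v := by
  rw [znorm_eq_zemb, EuclideanSpace.norm_eq, ← Real.sqrt_sq_eq_abs]
  apply Real.sqrt_le_sqrt
  have := Finset.single_le_sum (f := fun i => ‖zemb v i‖ ^ 2)
    (fun i _ => sq_nonneg _) (Finset.mem_univ j)
  simpa [zemb_apply, Real.norm_eq_abs, sq_abs] using this

lemma sum_abs_le_znorm {d : ℕ} (v : Fin d → ℤ) :
    ∑ j, |((v j : ℤ) : ℝ)| ≤ (d : ℝ) * znorm v := by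
  calc ∑ j, |((v j : ℤ) : ℝ)| ≤ (Finset.univ : Finset (Fin d)).card • znorm v :=
        Finset.sum_le_card_nsmul _ _ _ (fun j _ => abs_coord_le_znorm v j)
    _ = (d : ℝ) * znorm v := by simp [nsmul_eq_mul]

lemma summable_fin_prod {β : Type*} (g : β → ℝ) (hg : Summable g) (h0 : ∀ n, 0 ≤ g n) :
    ∀ n : ℕ, Summable (fun y : Fin n → β => ∏ i, g (y i)) := by
  intro n
  induction n with
  | zero => exact Summable.of_finite
  | succ n ih =>
    have h : Summable (fun p : β × (Fin n → β) => g p.1 * ∏ i, g (p.2 i)) :=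
      Summable.mul_of_nonneg (f := g) (g := fun y : Fin n → β => ∏ i, g (y i)) hg ih h0
        (fun y => Finset.prod_nonneg fun i _ => h0 _)
    have key : Summable ((fun y : Fin (n + 1) → β => ∏ i, g (y i)) ∘
        (Fin.consEquiv (fun _ : Fin (n + 1) => β))) := by
      have : ((fun y : Fin (n + 1) → β => ∏ i, g (y i)) ∘
          (Fin.consEquiv (fun _ : Fin (n + 1) => β))) =
          fun p : β × (Fin n → β) => g p.1 * ∏ i, g (p.2 i) := by
        funext p
        simp only [Function.comp_apply, Fin.consEquiv_apply]
        rw [Fin.prod_univ_succ]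
        simp
      rw [this]
      exact h
    exact (Equiv.summable_iff _).mp key

lemma summable_geom_int {γ : ℝ} (h0 : 0 ≤ γ) (h1 : γ < 1) :
    Summable (fun n : ℤ => γ ^ n.natAbs) := by
  apply Summable.of_nat_of_neg
  · simpa using summable_geometric_of_lt_one h0 h1
  · simpa using summable_geometric_of_lt_one h0 h1

theorem stmt_12 (d k : ℕ) (hd : 0 < d) (hk : 0 < k) (α : ℝ) (h0 : 0 < α) (h1 : α < 1) :
    Summable (fun x : {x : Fin (k + 1) → Fin d → ℤ // x 0 = 0 ∧ x (Fin.last k) = 0} =>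
      ∏ i : Fin k,
        (znorm (x.1 i.castSucc) + znorm (x.1 i.succ)) *
          α ^ znorm (x.1 i.castSucc - x.1 i.succ)) := by
  set L : ℝ := Real.log α with hLdef
  have hL : L < 0 := Real.log_neg h0 h1
  set γ : ℝ := Real.exp (L / (2 * d)) with hγdef
  have hγ0 : 0 < γ := Real.exp_pos _
  have hγ1 : γ < 1 := by
    rw [hγdef, Real.exp_lt_one_iff]
    apply div_neg_of_neg_of_pos hL
    positivity
  set c : ℝ := -L / 2 with hcdef
  have hc : 0 < c := by rw [hcdef]; linarith
  set C : ℝ := (2 * k / c) ^ k with hCdef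
  have hC0 : 0 ≤ C := by positivity
  set g : ℤ → ℝ := fun n => γ ^ n.natAbs with hgdef
  have hg0 : ∀ n, 0 ≤ g n := fun n => pow_nonneg hγ0.le _
  set F : (Fin k → Fin d → ℤ) → ℝ := fun y => C * ∏ i, ∏ j, g (y i j) with hFdef
  set Dm : {x : Fin (k + 1) → Fin d → ℤ // x 0 = 0 ∧ x (Fin.last k) = 0} →
      (Fin k → Fin d → ℤ) := fun x i => x.1 i.castSucc - x.1 i.succ with hDdef
  -- Summability of F ∘ Dm
  have hgsum : Summable g := summable_geom_int hγ0.le hγ1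
  have hFsum : Summable F := by
    have h1 : Summable (fun z : Fin d → ℤ => ∏ j, g (z j)) :=
      summable_fin_prod g hgsum hg0 d
    have h2 : Summable (fun y : Fin k → (Fin d → ℤ) =>
        ∏ i, (fun z : Fin d → ℤ => ∏ j, g (z j)) (y i)) :=
      summable_fin_prod _ h1 (fun z => Finset.prod_nonneg fun j _ => hg0 _) k
    exact h2.mul_left C
  have hDinj : Function.Injective Dm := by
    intro x x' hxx
    ext m j
    have key : ∀ m : Fin (k + 1), x.1 m = x'.1 m := by
      intro m
      induction m using Fin.induction with
      | zero => rw [x.2.1, x'.2.1]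
      | succ i ih =>
        have h1 : x.1 i.succ = x.1 i.castSucc - Dm x i := by
          simp [hDdef]
        have h2 : x'.1 i.succ = x'.1 i.castSucc - Dm x' i := by
          simp [hDdef]
        rw [h1, h2, ih, hxx]
    rw [key m]
  have hcomp : Summable (F ∘ Dm) := hFsum.comp_injective hDinj
  -- Pointwise bound
  apply Summable.of_nonneg_of_le _ _ hcomp
  · intro x
    apply Finset.prod_nonneg
    intro i _
    apply mul_nonneg
    · exact add_nonneg (znorm_nonneg _) (znorm_nonneg _)
    · exact Real.rpow_nonneg h0.le _
  · intro x
    set s : Fin k → ℝ := fun i => znorm (x.1 i.castSucc - x.1 i.succ) with hsdef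
    have hs0 : ∀ i, 0 ≤ s i := fun i => znorm_nonneg _
    set S : ℝ := ∑ i, s i with hSdef
    have hS0 : 0 ≤ S := Finset.sum_nonneg fun i _ => hs0 i
    -- every znorm (x.1 m) ≤ S
    have hbound : ∀ m : Fin (k + 1), znorm (x.1 m) ≤ S := by
      intro m
      set f : ℕ → EuclideanSpace ℝ (Fin d) := fun n => zemb (x.1 ⟨min n k, by omega⟩)
        with hfdef
      have hf0 : f 0 = 0 := by
        have : (⟨min 0 k, by omega⟩ : Fin (k + 1)) = 0 := by
          ext; simp
        simp only [hfdef, this, x.2.1]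
        ext j
        simp [zemb_apply]
      have hfm : f m.val = zemb (x.1 m) := by
        have : (⟨min m.val k, by omega⟩ : Fin (k + 1)) = m := by
          ext; simp; omega
        simp [hfdef, this]
      have hdist := dist_le_range_sum_dist f m.val
      rw [hf0, hfm] at hdist
      have hdist' : ‖zemb (x.1 m)‖ ≤ ∑ i ∈ Finset.range m.val, dist (f i) (f (i + 1)) := by
        rw [dist_comm] at hdist
        simpa [dist_eq_norm] using hdist
      have hsub : ∑ i ∈ Finset.range m.val, dist (f i) (f (i + 1)) ≤
          ∑ i ∈ Finset.range k, dist (f i) (f (i + 1)) := by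
        apply Finset.sum_le_sum_of_subset_of_nonneg
        · apply Finset.range_subset_range.mpr; omega
        · intro i _ _; exact dist_nonneg
      have heq : ∑ i ∈ Finset.range k, dist (f i) (f (i + 1)) = S := by
        rw [hSdef, Finset.sum_range fun i => dist (f i) (f (i+1))]
        apply Finset.sum_congr rfl
        intro i _
        have e1 : (⟨min i.val k, by omega⟩ : Fin (k + 1)) = i.castSucc := by
          ext; simp only [Fin.coe_castSucc]; omega
        have e2 : (⟨min (i.val + 1) k, by omega⟩ : Fin (k + 1)) = i.succ := by
          ext; simp only [Fin.val_succ]; omega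
        rw [hfdef]
        simp only [e1, e2]
        rw [dist_eq_norm, ← zemb_sub, ← znorm_eq_zemb]
      rw [znorm_eq_zemb]
      calc ‖zemb (x.1 m)‖ ≤ ∑ i ∈ Finset.range m.val, dist (f i) (f (i + 1)) := hdist'
        _ ≤ ∑ i ∈ Finset.range k, dist (f i) (f (i + 1)) := hsub
        _ = S := heq
    -- step 1: bound product by (2S)^k * exp (L * S)
    have step1 : ∏ i : Fin k, (znorm (x.1 i.castSucc) + znorm (x.1 i.succ)) *
        α ^ znorm (x.1 i.castSucc - x.1 i.succ) ≤ (2 * S) ^ k * Real.exp (L * S) := by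
      have hfac : ∀ i : Fin k, (znorm (x.1 i.castSucc) + znorm (x.1 i.succ)) *
          α ^ znorm (x.1 i.castSucc - x.1 i.succ) ≤ (2 * S) * Real.exp (L * s i) := by
        intro i
        have h1 : znorm (x.1 i.castSucc) + znorm (x.1 i.succ) ≤ 2 * S := by
          have := hbound i.castSucc
          have := hbound i.succ
          linarith
        have h2 : α ^ znorm (x.1 i.castSucc - x.1 i.succ) = Real.exp (L * s i) := by
          rw [Real.rpow_def_of_pos h0]
        rw [h2]
        apply mul_le_mul_of_nonneg_right h1 (Real.exp_pos _).le
      calc ∏ i : Fin k, (znorm (x.1 i.castSucc) + znorm (x.1 i.succ)) *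
            α ^ znorm (x.1 i.castSucc - x.1 i.succ)
          ≤ ∏ i : Fin k, (2 * S) * Real.exp (L * s i) := by
            apply Finset.prod_le_prod
            · intro i _
              exact mul_nonneg (add_nonneg (znorm_nonneg _) (znorm_nonneg _))
                (Real.rpow_nonneg h0.le _)
            · intro i _; exact hfac i
        _ = (2 * S) ^ k * Real.exp (L * S) := by
            rw [Finset.prod_mul_distrib, Finset.prod_const, ← Real.exp_sum,
              ← Finset.mul_sum, Finset.card_univ, Fintype.card_fin]
    -- step 2: (2S)^k ≤ C * exp (c * S)
    have step2 : (2 * S) ^ k ≤ C * Real.exp (c * S) := by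
      have ht : c * S / k ≤ Real.exp (c * S / k) := by
        have := Real.add_one_le_exp (c * S / k)
        linarith
      have h2S : 2 * S ≤ (2 * k / c) * Real.exp (c * S / k) := by
        have hk' : (0 : ℝ) < k := by exact_mod_cast hk
        have : S ≤ (k / c) * Real.exp (c * S / k) := by
          calc S = (k / c) * (c * S / k) := by field_simp
            _ ≤ (k / c) * Real.exp (c * S / k) := by
              apply mul_le_mul_of_nonneg_left ht
              positivity
        calc 2 * S ≤ 2 * ((k / c) * Real.exp (c * S / k)) := by linarith
          _ = (2 * k / c) * Real.exp (c * S / k) := by ring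
      calc (2 * S) ^ k ≤ ((2 * k / c) * Real.exp (c * S / k)) ^ k := by
            apply pow_le_pow_left₀ (by linarith) h2S
        _ = C * Real.exp (c * S / k) ^ k := by rw [hCdef, mul_pow]
        _ = C * Real.exp (c * S) := by
            rw [← Real.exp_nat_mul]
            congr 2
            field_simp
      -- done
    -- step 3: exp ((L/2) * S) ≤ ∏ i j, g (Dm x i j)
    have step3 : Real.exp ((L / 2) * S) ≤ ∏ i, ∏ j, g (Dm x i j) := by
      have hfac : ∀ i : Fin k, Real.exp ((L / 2) * s i) ≤ ∏ j, g (Dm x i j) := by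
        intro i
        have hsum : ∑ j, |((Dm x i j : ℤ) : ℝ)| ≤ (d : ℝ) * s i := by
          have := sum_abs_le_znorm (Dm x i)
          simpa [hsdef, hDdef] using this
        have hd' : (0 : ℝ) < d := by exact_mod_cast hd
        have h1 : (L / 2) * s i ≤ (L / (2 * d)) * ∑ j, |((Dm x i j : ℤ) : ℝ)| := by
          have hL2 : L / (2 * d) < 0 := by
            apply div_neg_of_neg_of_pos hL; positivity
          have : (L / (2 * d)) * ((d : ℝ) * s i) ≤ (L / (2 * d)) * ∑ j, |((Dm x i j : ℤ) : ℝ)| :=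
            mul_le_mul_of_nonpos_left hsum hL2.le
          calc (L / 2) * s i = (L / (2 * d)) * ((d : ℝ) * s i) := by field_simp
            _ ≤ (L / (2 * d)) * ∑ j, |((Dm x i j : ℤ) : ℝ)| := this
        calc Real.exp ((L / 2) * s i) ≤
              Real.exp ((L / (2 * d)) * ∑ j, |((Dm x i j : ℤ) : ℝ)|) := Real.exp_le_exp.mpr h1
          _ = ∏ j, Real.exp ((L / (2 * d)) * |((Dm x i j : ℤ) : ℝ)|) := by
              rw [← Real.exp_sum, ← Finset.mul_sum]
          _ = ∏ j, g (Dm x i j) := by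
              apply Finset.prod_congr rfl
              intro j _
              show Real.exp ((L / (2 * d)) * |((Dm x i j : ℤ) : ℝ)|) =
                γ ^ (Dm x i j).natAbs
              have habs : |((Dm x i j : ℤ) : ℝ)| = ((Dm x i j).natAbs : ℝ) := by
                rw [Nat.cast_natAbs, Int.cast_abs]
              rw [habs, mul_comm, Real.exp_nat_mul]
      calc Real.exp ((L / 2) * S) = ∏ i, Real.exp ((L / 2) * s i) := by
            rw [← Real.exp_sum, ← Finset.mul_sum]
        _ ≤ ∏ i, ∏ j, g (Dm x i j) := by
            apply Finset.prod_le_prod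
            · intro i _; exact (Real.exp_pos _).le
            · intro i _; exact hfac i
    -- combine
    have hLc : c * S + L * S = (L / 2) * S := by rw [hcdef]; ring
    calc ∏ i : Fin k, (znorm (x.1 i.castSucc) + znorm (x.1 i.succ)) *
          α ^ znorm (x.1 i.castSucc - x.1 i.succ)
        ≤ (2 * S) ^ k * Real.exp (L * S) := step1
      _ ≤ (C * Real.exp (c * S)) * Real.exp (L * S) :=
          mul_le_mul_of_nonneg_right step2 (Real.exp_pos _).le
      _ = C * Real.exp ((L / 2) * S) := by
          rw [mul_assoc, ← Real.exp_add, hLc]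
      _ ≤ C * ∏ i, ∏ j, g (Dm x i j) := mul_le_mul_of_nonneg_left step3 hC0
      _ = (F ∘ Dm) x := rfl
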